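/- arXiv:2603.06039 — 2 statements merged into one kernel-verified Lean document; each statement's English description precedes it below -/
import Mathlib

section
/- Let h ≥ 4 and let J_h be the instance on k = 2 routers consisting of: h packets of length 1 released at time 0 at router 1; h packets of length 2 released at time 2 at router 1; and 2h packets of length 1 released at time h + 3 at router 2. Then, for any tie-breaking rule, the maximum flow time of Greedy's schedule on J_h equals 3h − 2. -/
/-!
# Packet forwarding on a line network

There are `k` active routers `1, …, k`; router `i` forwards packets to router `i+1`.
An instance is a finite collection of packets; packet `p` has a release time `rel p : ℕ`,
a start router `start p ∈ {1, …, k}` and a length `len p ≥ 1` with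
`start p + len p − 1 ≤ k`; `p` must be forwarded by routers
`start p, start p + 1, …, start p + len p − 1` in this order.
-/

/-- An instance of online packet forwarding on a line network with `k` active routers.
Packets are indexed by `Fin n`. -/
structure PInstance (k : ℕ) where
  n : ℕ
  rel : Fin n → ℕ
  start : Fin n → ℕ
  len : Fin n → ℕ

namespace PInstance

variable {k : ℕ}

/-- The instance is well-formed: start routers are at least `1`, lengths are at least `1`,
and every packet fits on the line: `start p + len p − 1 ≤ k`. -/
def Valid (I : PInstance k) : Prop :=
  ∀ p, 1 ≤ I.start p ∧ 1 ≤ I.len p ∧ I.start p + I.len p ≤ k + 1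

/-- All packets of the instance have length `1` or `2`. -/
def Short (I : PInstance k) : Prop :=
  ∀ p, I.len p = 1 ∨ I.len p = 2

/-- A schedule assigns to each packet `p` and each hop index `j < len p` (corresponding to
router `start p + j`) the time step at which that router forwards `p`.  Values at
hop indices `j ≥ len p` are irrelevant. -/
abbrev Sched (I : PInstance k) := Fin I.n → ℕ → ℕ

/-- `arr I S p j` is the time from which hop `j` of packet `p` is available:
packet `p` is available at its start router from time `rel p`, and a packet forwarded
at time `t` is available at the next router from time `t + 1`. -/
def arr (I : PInstance k) (S : Sched I) (p : Fin I.n) : ℕ → ℕ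
  | 0 => I.rel p
  | j + 1 => S p j + 1

/-- Feasibility of a schedule: every hop is forwarded no earlier than the time from which
it is available (this includes releases and the order of the hops), and each router
forwards at most one packet in each time step. -/
def Feasible (I : PInstance k) (S : Sched I) : Prop :=
  (∀ p j, j < I.len p → arr I S p j ≤ S p j) ∧
  (∀ p q jp jq, jp < I.len p → jq < I.len q →
    I.start p + jp = I.start q + jq → S p jp = S q jq → p = q)

/-- Completion time `C(p)`: one plus the time step in which the last router forwards `p`. -/
def comp (I : PInstance k) (S : Sched I) (p : Fin I.n) : ℕ :=
  S p (I.len p - 1) + 1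

/-- Flow time of packet `p`: `C(p) − r(p)`. -/
def flowTime (I : PInstance k) (S : Sched I) (p : Fin I.n) : ℕ :=
  comp I S p - I.rel p

/-- Cost of a schedule: the maximum flow time over all packets of the instance. -/
def cost (I : PInstance k) (S : Sched I) : ℕ :=
  Finset.univ.sup (flowTime I S)

/-- `Opt(I)`: the minimum cost over all feasible schedules. -/
noncomputable def opt (I : PInstance k) : ℕ :=
  sInf {c | ∃ S : Sched I, Feasible I S ∧ cost I S = c}

/-- Hop `j` of packet `p` is waiting (available but not yet forwarded) at time `t`. -/
def Waiting (I : PInstance k) (S : Sched I) (p : Fin I.n) (j t : ℕ) : Prop :=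
  j < I.len p ∧ arr I S p j ≤ t ∧ t ≤ S p j

/-- Remaining length `ℓ(p,t)`: the number of routers that still need to forward `p`
at time `t` (under schedule `S`). -/
noncomputable def remLen (I : PInstance k) (S : Sched I) (p : Fin I.n) (t : ℕ) : ℕ :=
  Set.ncard {j : ℕ | j < I.len p ∧ t ≤ S p j}

/-- Priority `π(p,t) = (t − r(p)) + ℓ(p,t)`. -/
noncomputable def prio (I : PInstance k) (S : Sched I) (p : Fin I.n) (t : ℕ) : ℕ :=
  (t - I.rel p) + remLen I S p t

/-- A schedule is zealous if, at every time step and every router at which some packet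
is available (waiting), it forwards a packet there. -/
def Zealous (I : PInstance k) (S : Sched I) : Prop :=
  ∀ t i, (∃ p j, Waiting I S p j t ∧ I.start p + j = i) →
    ∃ q jq, Waiting I S q jq t ∧ I.start q + jq = i ∧ S q jq = t

/-- `S` is a schedule that Greedy (with some tie-breaking rule) produces: it is feasible,
and in every time step, every router at which at least one packet is waiting forwards a
waiting packet of maximum priority among the packets waiting there. -/
def IsGreedy (I : PInstance k) (S : Sched I) : Prop :=
  Feasible I S ∧
  ∀ t i, (∃ p j, Waiting I S p j t ∧ I.start p + j = i) →
    ∃ q jq, Waiting I S q jq t ∧ I.start q + jq = i ∧ S q jq = t ∧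
      ∀ p j, Waiting I S p j t → I.start p + j = i → prio I S p t ≤ prio I S q t

/-- The number of packets released by time `t` that still need to be forwarded by
router `i` at time `t` under schedule `S`. -/
noncomputable def needs (I : PInstance k) (S : Sched I) (i t : ℕ) : ℕ :=
  Set.ncard {p : Fin I.n | I.rel p ≤ t ∧ ∃ j, j < I.len p ∧ I.start p + j = i ∧ t ≤ S p j}

end PInstance

/-- Build an instance from a list of packets, each given as a triple
(release time, start router, length). -/
def ofTriples (k : ℕ) (L : List (ℕ × ℕ × ℕ)) : PInstance k where
  n := L.length
  rel p := (L.get p).1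
  start p := (L.get p).2.1
  len p := (L.get p).2.2

/-- The instance `J_h` on `k = 2` routers: `h` packets of length `1` released at time `0`
at router `1`; `h` packets of length `2` released at time `2` at router `1`; and `2h`
packets of length `1` released at time `h + 3` at router `2`. -/
def Jh (h : ℕ) : PInstance 2 :=
  ofTriples 2 (List.replicate h (0, 1, 1) ++ List.replicate h (2, 1, 2)
    ++ List.replicate (2 * h) (h + 3, 2, 1))

-- ===== helpers =====
open PInstance

lemma Jh_n (h : ℕ) : (Jh h).n = 4 * h := by
  simp [Jh, ofTriples]; ring

lemma Jh_get (h : ℕ) (p : Fin (Jh h).n) :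
    (List.replicate h (0, 1, 1) ++ List.replicate h (2, 1, 2)
      ++ List.replicate (2 * h) (h + 3, 2, 1)).get p
    = if (p : ℕ) < h then ((0,1,1) : ℕ × ℕ × ℕ) else if (p:ℕ) < 2*h then (2,1,2) else (h+3,2,1) := by
  have hp := p.isLt
  simp only [Jh, ofTriples] at hp
  simp only [List.length_append, List.length_replicate] at hp
  erw [List.get_eq_getElem]
  rcases lt_or_ge (p:ℕ) h with h1 | h1
  · rw [List.getElem_append_left (by simp; omega), List.getElem_append_left (by simpa using h1),
      List.getElem_replicate]
    simp [h1]
  · rcases lt_or_ge (p:ℕ) (2*h) with h2 | h2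
    · rw [List.getElem_append_left (by simp; omega), List.getElem_append_right (by simpa using h1),
        List.getElem_replicate]
      rw [if_neg (by omega), if_pos h2]
    · rw [List.getElem_append_right (by simp; omega), List.getElem_replicate]
      rw [if_neg (by omega), if_neg (by omega)]

lemma Jh_rel (h : ℕ) (p : Fin (Jh h).n) :
    (Jh h).rel p = if (p:ℕ) < h then 0 else if (p:ℕ) < 2*h then 2 else h+3 := by
  show ((List.replicate h (0,1,1) ++ List.replicate h (2,1,2)
    ++ List.replicate (2*h) (h+3,2,1)).get p).1 = _
  rw [Jh_get]; split_ifs <;> rfl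

lemma Jh_start (h : ℕ) (p : Fin (Jh h).n) :
    (Jh h).start p = if (p:ℕ) < 2*h then 1 else 2 := by
  show ((List.replicate h (0,1,1) ++ List.replicate h (2,1,2)
    ++ List.replicate (2*h) (h+3,2,1)).get p).2.1 = _
  rw [Jh_get]; split_ifs <;> first | rfl | omega

lemma Jh_len (h : ℕ) (p : Fin (Jh h).n) :
    (Jh h).len p = if (p:ℕ) < h then 1 else if (p:ℕ) < 2*h then 2 else 1 := by
  show ((List.replicate h (0,1,1) ++ List.replicate h (2,1,2)
    ++ List.replicate (2*h) (h+3,2,1)).get p).2.2 = _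
  rw [Jh_get]; split_ifs <;> rfl

lemma remLen_le {k : ℕ} (I : PInstance k) (S : Sched I) (p : Fin I.n) (t : ℕ) :
    remLen I S p t ≤ I.len p := by
  have hsub : {j : ℕ | j < I.len p ∧ t ≤ S p j} ⊆ Set.Iio (I.len p) := fun j hj => hj.1
  calc remLen I S p t ≤ (Set.Iio (I.len p)).ncard := Set.ncard_le_ncard hsub (Set.finite_Iio _)
    _ = I.len p := by rw [← Finset.coe_Iio, Set.ncard_coe_finset, Nat.card_Iio]

lemma one_le_remLen {k : ℕ} (I : PInstance k) (S : Sched I) {p : Fin I.n} {j t : ℕ}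
    (hj : j < I.len p) (ht : t ≤ S p j) : 1 ≤ remLen I S p t := by
  have hsub : ({j} : Set ℕ) ⊆ {j' | j' < I.len p ∧ t ≤ S p j'} := by
    intro x hx; rcases hx with rfl; exact ⟨hj, ht⟩
  have hfin : {j' : ℕ | j' < I.len p ∧ t ≤ S p j'}.Finite :=
    (Set.finite_Iio _).subset (fun x hx => hx.1)
  have := Set.ncard_le_ncard hsub hfin
  simpa [remLen] using this

lemma card_filter_Ico (n a b : ℕ) (hb : b ≤ n) :
    (Finset.univ.filter fun p : Fin n => a ≤ (p:ℕ) ∧ (p:ℕ) < b).card = b - a := by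
  rw [← Nat.card_Ico a b]
  refine Finset.card_bij (fun p _ => (p : ℕ)) ?_ ?_ ?_
  · intro p hp
    simp only [Finset.mem_filter] at hp
    simp only [Finset.mem_Ico]
    exact hp.2
  · intro p _ q _ hpq
    exact Fin.val_injective hpq
  · intro x hx
    simp only [Finset.mem_Ico] at hx
    exact ⟨⟨x, lt_of_lt_of_le hx.2 hb⟩, by simp [Finset.mem_filter, hx], rfl⟩

lemma exists_le_of_card {n : ℕ} (f : Fin n → ℕ) (P : Finset (Fin n)) (c t : ℕ)
    (hinj : ∀ p ∈ P, ∀ q ∈ P, f p = f q → p = q)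
    (hlb : ∀ p ∈ P, c ≤ f p) (hct : c ≤ t) (hcard : t - c < P.card) :
    ∃ p ∈ P, t ≤ f p := by
  by_contra hcon
  push_neg at hcon
  have hsub : ∀ p ∈ P, f p ∈ Finset.Ico c t :=
    fun p hp => Finset.mem_Ico.2 ⟨hlb p hp, hcon p hp⟩
  have := Finset.card_le_card_of_injOn f hsub
    (fun p hp q hq hfpq => hinj p (Finset.mem_coe.1 hp) q (Finset.mem_coe.1 hq) hfpq)
  rw [Nat.card_Ico] at this
  omega

lemma mem_of_image_card {n : ℕ} (P : Finset (Fin n)) (f : Fin n → ℕ) (T : Finset ℕ)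
    (hinj : ∀ p ∈ P, ∀ q ∈ P, f p = f q → p = q)
    (hsurj : ∀ t ∈ T, ∃ p ∈ P, f p = t)
    (hcard : P.card = T.card) : ∀ p ∈ P, f p ∈ T := by
  have h1 : T ⊆ P.image f := by
    intro t ht
    obtain ⟨p, hp, hfp⟩ := hsurj t ht
    exact Finset.mem_image.2 ⟨p, hp, hfp⟩
  have h2 : (P.image f).card ≤ T.card := by
    rw [Finset.card_image_of_injOn
      (fun p hp q hq hfpq => hinj p (Finset.mem_coe.1 hp) q (Finset.mem_coe.1 hq) hfpq)]
    exact hcard.le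
  have h3 := Finset.eq_of_subset_of_card_le h1 h2
  intro p hp
  rw [h3]
  exact Finset.mem_image_of_mem f hp

/-- Let `h ≥ 4`.  Then, for any tie-breaking rule (i.e. for any schedule
`S` that Greedy can produce on `J_h`), the maximum flow time of Greedy's schedule on `J_h`
equals `3h − 2`. -/
theorem greedy_cost_Jh (h : ℕ) (hh : 4 ≤ h)
    (S : PInstance.Sched (Jh h)) (hG : (Jh h).IsGreedy S) :
    (Jh h).cost S = 3 * h - 2 := by
  obtain ⟨⟨hF1, hF2⟩, hGr⟩ := hG
  have hn : (Jh h).n = 4 * h := Jh_n h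
  -- packet classification facts
  have hval : ∀ p : Fin (Jh h).n, (p:ℕ) < 4*h := fun p => hn ▸ p.isLt
  have hrelA : ∀ p : Fin (Jh h).n, (p:ℕ) < h → (Jh h).rel p = 0 := by
    intro p hp; rw [Jh_rel, if_pos hp]
  have hrelB : ∀ p : Fin (Jh h).n, h ≤ (p:ℕ) → (p:ℕ) < 2*h → (Jh h).rel p = 2 := by
    intro p h1 h2; rw [Jh_rel, if_neg (by omega), if_pos h2]
  have hrelC : ∀ p : Fin (Jh h).n, 2*h ≤ (p:ℕ) → (Jh h).rel p = h+3 := by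
    intro p h1; rw [Jh_rel, if_neg (by omega), if_neg (by omega)]
  have hstart1 : ∀ p : Fin (Jh h).n, (p:ℕ) < 2*h → (Jh h).start p = 1 := by
    intro p hp; rw [Jh_start, if_pos hp]
  have hstart2 : ∀ p : Fin (Jh h).n, 2*h ≤ (p:ℕ) → (Jh h).start p = 2 := by
    intro p hp; rw [Jh_start, if_neg (by omega)]
  have hlenA : ∀ p : Fin (Jh h).n, (p:ℕ) < h → (Jh h).len p = 1 := by
    intro p hp; rw [Jh_len, if_pos hp]
  have hlenB : ∀ p : Fin (Jh h).n, h ≤ (p:ℕ) → (p:ℕ) < 2*h → (Jh h).len p = 2 := by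
    intro p h1 h2; rw [Jh_len, if_neg (by omega), if_pos h2]
  have hlenC : ∀ p : Fin (Jh h).n, 2*h ≤ (p:ℕ) → (Jh h).len p = 1 := by
    intro p h1; rw [Jh_len, if_neg (by omega), if_neg (by omega)]
  have hlenpos : ∀ p : Fin (Jh h).n, 0 < (Jh h).len p := by
    intro p; rw [Jh_len]; split_ifs <;> omega
  -- injectivity of hop-0 times among packets starting at router 1
  have inj1 : ∀ p q : Fin (Jh h).n, (p:ℕ) < 2*h → (q:ℕ) < 2*h → S p 0 = S q 0 → p = q := by
    intro p q hp hq hS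
    exact hF2 p q 0 0 (hlenpos p) (hlenpos q) (by rw [hstart1 p hp, hstart1 q hq]) hS
  -- classification of forwarding events at router 1
  have r1_class : ∀ q : Fin (Jh h).n, ∀ jq, jq < (Jh h).len q → (Jh h).start q + jq = 1 →
      jq = 0 ∧ (q:ℕ) < 2*h := by
    intro q jq hlt heq
    rcases lt_or_ge (q:ℕ) (2*h) with hq | hq
    · have := hstart1 q hq; omega
    · have := hstart2 q hq; omega
  -- classification of forwarding events at router 2
  have r2_class : ∀ q : Fin (Jh h).n, ∀ jq, jq < (Jh h).len q → (Jh h).start q + jq = 2 →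
      (h ≤ (q:ℕ) ∧ (q:ℕ) < 2*h ∧ jq = 1) ∨ (2*h ≤ (q:ℕ) ∧ jq = 0) := by
    intro q jq hlt heq
    rcases lt_or_ge (q:ℕ) h with h1 | h1
    · have := hstart1 q (by omega); have := hlenA q h1; omega
    · rcases lt_or_ge (q:ℕ) (2*h) with h2 | h2
      · have := hstart1 q h2; have := hlenB q h1 h2; left; omega
      · right; exact ⟨h2, by have := hstart2 q h2; omega⟩
  -- the three packet classes as finsets
  set PA := Finset.univ.filter (fun p : Fin (Jh h).n => 0 ≤ (p:ℕ) ∧ (p:ℕ) < h) with hPA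
  set PB := Finset.univ.filter (fun p : Fin (Jh h).n => h ≤ (p:ℕ) ∧ (p:ℕ) < 2*h) with hPB
  set PC := Finset.univ.filter (fun p : Fin (Jh h).n => 2*h ≤ (p:ℕ) ∧ (p:ℕ) < 4*h) with hPC
  have cardPA : PA.card = h := by
    have hc := card_filter_Ico ((Jh h).n) 0 h (by omega)
    rw [hPA, hc]
    omega
  have cardPB : PB.card = h := by
    have hc := card_filter_Ico ((Jh h).n) h (2*h) (by omega)
    rw [hPB, hc]; omega
  have cardPC : PC.card = 2*h := by
    have hc := card_filter_Ico ((Jh h).n) (2*h) (4*h) (by omega)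
    rw [hPC, hc]; omega
  -- ===== Phase A: at each time t < h an A-packet is forwarded at router 1 =====
  have hAex : ∀ t, t < h → ∃ p : Fin (Jh h).n, (p:ℕ) < h ∧ S p 0 = t := by
    intro t ht
    obtain ⟨p, hpP, hple⟩ := exists_le_of_card (fun p => S p 0) PA 0 t
      (fun p hp q hq hS => inj1 p q
        (by rw [hPA] at hp; simp only [Finset.mem_filter] at hp; omega)
        (by rw [hPA] at hq; simp only [Finset.mem_filter] at hq; omega) hS)
      (fun p _ => Nat.zero_le _) (Nat.zero_le _) (by rw [cardPA]; omega)
    rw [hPA] at hpP; simp only [Finset.mem_filter] at hpP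
    have hpH : (p:ℕ) < h := hpP.2.2
    have hw : (Jh h).Waiting S p 0 t := by
      refine ⟨hlenpos p, ?_, hple⟩
      show (Jh h).rel p ≤ t
      rw [hrelA p hpH]; omega
    obtain ⟨q, jq, hwq, hrt, hSq, hmax⟩ := hGr t 1
      ⟨p, 0, hw, by rw [hstart1 p (by omega)]⟩
    obtain ⟨hjq0, hq2h⟩ := r1_class q jq hwq.1 hrt
    subst hjq0
    rcases lt_or_ge (q:ℕ) h with hqh | hqh
    · exact ⟨q, hqh, hSq⟩
    · exfalso
      have harrq : (2:ℕ) ≤ t := by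
        have := hwq.2.1
        show (2:ℕ) ≤ t
        rwa [show (Jh h).arr S q 0 = (Jh h).rel q from rfl, hrelB q hqh hq2h] at this
      have hpq : (Jh h).prio S q t ≤ t := by
        have h1 := remLen_le (Jh h) S q t
        rw [hlenB q hqh hq2h] at h1
        have : (Jh h).prio S q t = (t - (Jh h).rel q) + remLen (Jh h) S q t := rfl
        rw [this, hrelB q hqh hq2h]; omega
      have hpp : t + 1 ≤ (Jh h).prio S p t := by
        have h1 := one_le_remLen (Jh h) S (p := p) (j := 0) (t := t) (hlenpos p) hple
        have : (Jh h).prio S p t = (t - (Jh h).rel p) + remLen (Jh h) S p t := rfl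
        rw [this, hrelA p hpH]; omega
      have := hmax p 0 hw (by rw [hstart1 p (by omega)])
      omega
  -- every A-packet is forwarded at a time < h
  have hAub : ∀ p : Fin (Jh h).n, (p:ℕ) < h → S p 0 < h := by
    intro p hp
    have := mem_of_image_card PA (fun p => S p 0) (Finset.range h)
      (fun p hp q hq hS => inj1 p q
        (by rw [hPA] at hp; simp only [Finset.mem_filter] at hp; omega)
        (by rw [hPA] at hq; simp only [Finset.mem_filter] at hq; omega) hS)
      (fun t ht => by
        obtain ⟨p, hp, hS⟩ := hAex t (Finset.mem_range.1 ht)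
        exact ⟨p, by rw [hPA]; simp only [Finset.mem_filter]; exact ⟨Finset.mem_univ _, Nat.zero_le _, hp⟩, hS⟩)
      (by rw [cardPA, Finset.card_range])
      p (by rw [hPA]; simp only [Finset.mem_filter]; exact ⟨Finset.mem_univ _, Nat.zero_le _, hp⟩)
    exact Finset.mem_range.1 this
  -- every B-packet starts hop 0 at time ≥ h
  have hBlb : ∀ q : Fin (Jh h).n, h ≤ (q:ℕ) → (q:ℕ) < 2*h → h ≤ S q 0 := by
    intro q h1 h2
    by_contra hc
    push_neg at hc
    obtain ⟨p, hp, hSp⟩ := hAex (S q 0) hc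
    have := inj1 p q (by omega) h2 hSp
    subst this
    omega
  -- ===== Phase B: at each time t ∈ [h, 2h) a B-packet is forwarded at router 1 =====
  have hBex : ∀ t, h ≤ t → t < 2*h → ∃ q : Fin (Jh h).n, h ≤ (q:ℕ) ∧ (q:ℕ) < 2*h ∧ S q 0 = t := by
    intro t ht1 ht2
    obtain ⟨p, hpP, hple⟩ := exists_le_of_card (fun p => S p 0) PB h t
      (fun p hp q hq hS => inj1 p q
        (by rw [hPB] at hp; simp only [Finset.mem_filter] at hp; omega)
        (by rw [hPB] at hq; simp only [Finset.mem_filter] at hq; omega) hS)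
      (fun p hp => by
        rw [hPB] at hp; simp only [Finset.mem_filter] at hp
        exact hBlb p hp.2.1 hp.2.2)
      ht1 (by rw [cardPB]; omega)
    rw [hPB] at hpP; simp only [Finset.mem_filter] at hpP
    have hpB1 : h ≤ (p:ℕ) := hpP.2.1
    have hpB2 : (p:ℕ) < 2*h := hpP.2.2
    have hw : (Jh h).Waiting S p 0 t := by
      refine ⟨hlenpos p, ?_, hple⟩
      show (Jh h).rel p ≤ t
      rw [hrelB p hpB1 hpB2]; omega
    obtain ⟨q, jq, hwq, hrt, hSq, _⟩ := hGr t 1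
      ⟨p, 0, hw, by rw [hstart1 p hpB2]⟩
    obtain ⟨hjq0, hq2h⟩ := r1_class q jq hwq.1 hrt
    subst hjq0
    rcases lt_or_ge (q:ℕ) h with hqh | hqh
    · exfalso
      have := hAub q hqh
      omega
    · exact ⟨q, hqh, hq2h, hSq⟩
  -- every B-packet does hop 0 at a time < 2h
  have hBub : ∀ q : Fin (Jh h).n, h ≤ (q:ℕ) → (q:ℕ) < 2*h → S q 0 < 2*h := by
    intro q h1 h2
    have := mem_of_image_card PB (fun p => S p 0) (Finset.Ico h (2*h))
      (fun p hp q hq hS => inj1 p q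
        (by rw [hPB] at hp; simp only [Finset.mem_filter] at hp; omega)
        (by rw [hPB] at hq; simp only [Finset.mem_filter] at hq; omega) hS)
      (fun t ht => by
        have ht' := Finset.mem_Ico.1 ht
        obtain ⟨p, hp1, hp2, hS⟩ := hBex t ht'.1 ht'.2
        exact ⟨p, by rw [hPB]; simp only [Finset.mem_filter]; exact ⟨Finset.mem_univ _, hp1, hp2⟩, hS⟩)
      (by rw [cardPB, Nat.card_Ico]; omega)
      q (by rw [hPB]; simp only [Finset.mem_filter]; exact ⟨Finset.mem_univ _, h1, h2⟩)
    exact (Finset.mem_Ico.1 this).2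
  -- ===== hop 1 of B-packets happens immediately =====
  have hB1 : ∀ m, ∀ q : Fin (Jh h).n, h ≤ (q:ℕ) → (q:ℕ) < 2*h → S q 0 = m → S q 1 = m + 1 := by
    intro m
    induction m using Nat.strong_induction_on with
    | _ m IH =>
      intro q hq1 hq2 hSq0
      have hlen2 : (Jh h).len q = 2 := hlenB q hq1 hq2
      have harr1 : (Jh h).arr S q 1 = m + 1 := by
        show S q 0 + 1 = m + 1
        rw [hSq0]
      have hle : m + 1 ≤ S q 1 := by
        have := hF1 q 1 (by omega)
        rwa [harr1] at this
      have hw : (Jh h).Waiting S q 1 (m+1) := ⟨by omega, by rw [harr1], hle⟩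
      obtain ⟨q', jq', hwq', hrt, hSq', hmax⟩ := hGr (m+1) 2
        ⟨q, 1, hw, by rw [hstart1 q hq2]⟩
      rcases r2_class q' jq' hwq'.1 hrt with ⟨hb1, hb2, hj1⟩ | ⟨hc1, hj0⟩
      · subst hj1
        have harr' : S q' 0 + 1 ≤ m + 1 := hwq'.2.1
        rcases eq_or_lt_of_le (show S q' 0 ≤ m by omega) with heq | hlt
        · have : q' = q := inj1 q' q (by omega) hq2 (by rw [heq, hSq0])
          subst this
          exact hSq'
        · exfalso
          have hIH := IH (S q' 0) hlt q' hb1 hb2 rfl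
          have := hwq'.2.2
          omega
      · subst hj0
        exfalso
        have hrelq' : (Jh h).rel q' = h + 3 := hrelC q' hc1
        have harrC : h + 3 ≤ m + 1 := by
          have := hwq'.2.1
          rwa [show (Jh h).arr S q' 0 = (Jh h).rel q' from rfl, hrelq'] at this
        have h1 : (Jh h).prio S q' (m+1) ≤ (m+1) - (h+3) + 1 := by
          have hr := remLen_le (Jh h) S q' (m+1)
          rw [hlenC q' hc1] at hr
          have : (Jh h).prio S q' (m+1) = ((m+1) - (Jh h).rel q') + remLen (Jh h) S q' (m+1) := rfl
          rw [this, hrelq']; omega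
        have h2 : (m+1) - 2 + 1 ≤ (Jh h).prio S q (m+1) := by
          have hr := one_le_remLen (Jh h) S (p := q) (j := 1) (t := m+1) (by omega) hle
          have : (Jh h).prio S q (m+1) = ((m+1) - (Jh h).rel q) + remLen (Jh h) S q (m+1) := rfl
          rw [this, hrelB q hq1 hq2]; omega
        have := hmax q 1 hw (by rw [hstart1 q hq2])
        omega
  -- ===== C-packets are forwarded only from time 2h+1 on =====
  have hClb : ∀ c : Fin (Jh h).n, 2*h ≤ (c:ℕ) → 2*h+1 ≤ S c 0 := by
    intro c hc
    have h3 : h + 3 ≤ S c 0 := by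
      have := hF1 c 0 (hlenpos c)
      rwa [show (Jh h).arr S c 0 = (Jh h).rel c from rfl, hrelC c hc] at this
    by_contra hcon
    push_neg at hcon
    obtain ⟨q, hq1, hq2, hq0⟩ := hBex (S c 0 - 1) (by omega) (by omega)
    have hq1' : S q 1 = S c 0 := by
      rw [hB1 (S c 0 - 1) q hq1 hq2 hq0]; omega
    have : c = q := hF2 c q 0 1 (hlenpos c) (by rw [hlenB q hq1 hq2]; omega)
      (by rw [hstart2 c hc, hstart1 q hq2]) (by rw [hq1'])
    subst this
    omega
  -- ===== Phase C: at each time t ∈ [2h+1, 4h] a C-packet is forwarded at router 2 =====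
  have hCex : ∀ t, 2*h+1 ≤ t → t ≤ 4*h → ∃ c : Fin (Jh h).n, 2*h ≤ (c:ℕ) ∧ S c 0 = t := by
    intro t ht1 ht2
    have injC : ∀ p ∈ PC, ∀ q ∈ PC, S p 0 = S q 0 → p = q := by
      intro p hp q hq hS
      rw [hPC] at hp hq; simp only [Finset.mem_filter] at hp hq
      exact hF2 p q 0 0 (hlenpos p) (hlenpos q)
        (by rw [hstart2 p hp.2.1, hstart2 q hq.2.1]) hS
    obtain ⟨p, hpP, hple⟩ := exists_le_of_card (fun p => S p 0) PC (2*h+1) t injC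
      (fun p hp => by
        rw [hPC] at hp; simp only [Finset.mem_filter] at hp
        exact hClb p hp.2.1)
      ht1 (by rw [cardPC]; omega)
    rw [hPC] at hpP; simp only [Finset.mem_filter] at hpP
    have hpC : 2*h ≤ (p:ℕ) := hpP.2.1
    have hw : (Jh h).Waiting S p 0 t := by
      refine ⟨hlenpos p, ?_, hple⟩
      show (Jh h).rel p ≤ t
      rw [hrelC p hpC]; omega
    obtain ⟨q, jq, hwq, hrt, hSq, _⟩ := hGr t 2
      ⟨p, 0, hw, by rw [hstart2 p hpC]⟩
    rcases r2_class q jq hwq.1 hrt with ⟨hb1, hb2, hj1⟩ | ⟨hc1, hj0⟩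
    · exfalso
      subst hj1
      obtain ⟨m, hm⟩ : ∃ m, S q 0 = m := ⟨S q 0, rfl⟩
      have := hB1 m q hb1 hb2 hm
      have hub := hBub q hb1 hb2
      have := hwq.2.2
      omega
    · subst hj0
      exact ⟨q, hc1, hSq⟩
  -- every C-packet is forwarded by time 4h
  have hCub : ∀ c : Fin (Jh h).n, 2*h ≤ (c:ℕ) → S c 0 ≤ 4*h := by
    intro c hc
    have := mem_of_image_card PC (fun p => S p 0) (Finset.Ico (2*h+1) (4*h+1))
      (fun p hp q hq hS => by
        rw [hPC] at hp hq; simp only [Finset.mem_filter] at hp hq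
        exact hF2 p q 0 0 (hlenpos p) (hlenpos q)
          (by rw [hstart2 p hp.2.1, hstart2 q hq.2.1]) hS)
      (fun t ht => by
        have ht' := Finset.mem_Ico.1 ht
        obtain ⟨p, hp1, hS⟩ := hCex t ht'.1 (by omega)
        exact ⟨p, by rw [hPC]; simp only [Finset.mem_filter]; exact ⟨Finset.mem_univ _, hp1, hval p⟩, hS⟩)
      (by rw [cardPC, Nat.card_Ico]; omega)
      c (by rw [hPC]; simp only [Finset.mem_filter]; exact ⟨Finset.mem_univ _, hc, hval c⟩)
    exact Nat.lt_succ_iff.1 ((Finset.mem_Ico.1 this).2)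
  -- ===== cost computation =====
  have hflow : ∀ p : Fin (Jh h).n, (Jh h).flowTime S p ≤ 3*h - 2 := by
    intro p
    show (Jh h).comp S p - (Jh h).rel p ≤ 3*h - 2
    show S p ((Jh h).len p - 1) + 1 - (Jh h).rel p ≤ 3*h - 2
    rcases lt_or_ge (p:ℕ) h with h1 | h1
    · rw [hlenA p h1, hrelA p h1]
      have := hAub p h1
      simp only [Nat.sub_self]
      omega
    · rcases lt_or_ge (p:ℕ) (2*h) with h2 | h2
      · rw [hlenB p h1 h2, hrelB p h1 h2]
        have hub := hBub p h1 h2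
        have := hB1 (S p 0) p h1 h2 rfl
        show S p 1 + 1 - 2 ≤ 3*h - 2
        omega
      · rw [hlenC p h2, hrelC p h2]
        have := hCub p h2
        simp only [Nat.sub_self]
        omega
  obtain ⟨c, hcC, hc4h⟩ := hCex (4*h) (by omega) (le_refl _)
  have hfc : (Jh h).flowTime S c = 3*h - 2 := by
    show S c ((Jh h).len c - 1) + 1 - (Jh h).rel c = 3*h - 2
    rw [hlenC c hcC, hrelC c hcC]
    simp only [Nat.sub_self]
    rw [hc4h]
    omega
  show Finset.univ.sup ((Jh h).flowTime S) = 3*h - 2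
  refine le_antisymm (Finset.sup_le fun p _ => hflow p) ?_
  calc 3*h - 2 = (Jh h).flowTime S c := hfc.symm
    _ ≤ Finset.univ.sup ((Jh h).flowTime S) := Finset.le_sup (Finset.mem_univ c)
end

section
/- Let h ≥ 1 and let the instance on k = 2 routers consist of 2h packets of length 1 released at time 0 at router 1 and h packets of length 2 released at time h at router 1. Then there exists a feasible schedule for this instance whose maximum flow time is at most 2h + 1; consequently, its optimal cost is at most 2h + 1. -/
/-- The instance on `k = 2` routers consisting of `2h` packets of length `1` released at
time `0` at router `1` and `h` packets of length `2` released at time `h` at router `1`. -/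
def shortLong (h : ℕ) : PInstance 2 :=
  ofTriples 2 (List.replicate (2 * h) (0, 1, 1) ++ List.replicate h (h, 1, 2))

lemma shortLong_spec (h : ℕ) (p : Fin (shortLong h).n) :
    (shortLong h).start p = 1 ∧
    ((p.val < 2*h ∧ (shortLong h).rel p = 0 ∧ (shortLong h).len p = 1) ∨
     (2*h ≤ p.val ∧ (shortLong h).rel p = h ∧ (shortLong h).len p = 2)) := by
  have hget : ((List.replicate (2*h) ((0,1,1):ℕ×ℕ×ℕ) ++ List.replicate h (h,1,2)).get p)
      = if p.val < 2*h then (0,1,1) else (h,1,2) := by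
    rcases lt_or_ge p.val (2*h) with hc | hc
    · erw [List.get_eq_getElem]
      rw [List.getElem_append_left (by simpa using hc),
        List.getElem_replicate, if_pos hc]
    · erw [List.get_eq_getElem]
      rw [List.getElem_append_right (by simpa using hc),
        List.getElem_replicate, if_neg (not_lt.2 hc)]
  rcases lt_or_ge p.val (2*h) with hc | hc
  · rw [if_pos hc] at hget
    refine ⟨?_, Or.inl ⟨hc, ?_, ?_⟩⟩
    · show ((List.replicate (2*h) ((0,1,1):ℕ×ℕ×ℕ) ++ List.replicate h (h,1,2)).get p).2.1 = 1
      rw [hget]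
    · show ((List.replicate (2*h) ((0,1,1):ℕ×ℕ×ℕ) ++ List.replicate h (h,1,2)).get p).1 = 0
      rw [hget]
    · show ((List.replicate (2*h) ((0,1,1):ℕ×ℕ×ℕ) ++ List.replicate h (h,1,2)).get p).2.2 = 1
      rw [hget]
  · rw [if_neg (not_lt.2 hc)] at hget
    refine ⟨?_, Or.inr ⟨hc, ?_, ?_⟩⟩
    · show ((List.replicate (2*h) ((0,1,1):ℕ×ℕ×ℕ) ++ List.replicate h (h,1,2)).get p).2.1 = 1
      rw [hget]
    · show ((List.replicate (2*h) ((0,1,1):ℕ×ℕ×ℕ) ++ List.replicate h (h,1,2)).get p).1 = h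
      rw [hget]
    · show ((List.replicate (2*h) ((0,1,1):ℕ×ℕ×ℕ) ++ List.replicate h (h,1,2)).get p).2.2 = 2
      rw [hget]

lemma shortLong_n (h : ℕ) : (shortLong h).n = 2*h + h := by
  simp [shortLong, ofTriples]

/-- Let `h ≥ 1`.  Then there exists a feasible schedule for the above
instance whose maximum flow time is at most `2h + 1`; consequently, its optimal cost is at
most `2h + 1`. -/
theorem opt_shortLong_upper (h : ℕ) (hh : 1 ≤ h) :
    (∃ S : PInstance.Sched (shortLong h), (shortLong h).Feasible S ∧
      (shortLong h).cost S ≤ 2 * h + 1) ∧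
    (shortLong h).opt ≤ 2 * h + 1 := by
  have key : ∃ S : PInstance.Sched (shortLong h), (shortLong h).Feasible S ∧
      (shortLong h).cost S ≤ 2 * h + 1 := by
    refine ⟨fun p j => p.val + j, ?_, ?_⟩
    · constructor
      · intro p j hj
        cases j with
        | zero =>
          rcases (shortLong_spec h p).2 with ⟨_, hr, _⟩ | ⟨hge, hr, _⟩
          · simp only [PInstance.arr, hr]; omega
          · simp only [PInstance.arr, hr]; omega
        | succ j => simp only [PInstance.arr]; omega
      · intro p q jp jq hjp hjq hst hS
        have h1 : (shortLong h).start p = 1 := (shortLong_spec h p).1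
        have h2 : (shortLong h).start q = 1 := (shortLong_spec h q).1
        rw [h1, h2] at hst
        have hj : jp = jq := by omega
        subst hj
        simp only at hS
        exact Fin.ext (by omega)
    · apply Finset.sup_le
      intro p _
      have hpn : p.val < 2*h + h := by
        have h1 := p.isLt
        have h2 := shortLong_n h
        omega
      rcases (shortLong_spec h p).2 with ⟨hlt, hr, hl⟩ | ⟨hge, hr, hl⟩
      · simp only [PInstance.flowTime, PInstance.comp, hr, hl]; omega
      · simp only [PInstance.flowTime, PInstance.comp, hr, hl]; omega
  refine ⟨key, ?_⟩
  obtain ⟨S, hF, hc⟩ := key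
  calc (shortLong h).opt ≤ (shortLong h).cost S := Nat.sInf_le ⟨S, hF, rfl⟩
    _ ≤ 2 * h + 1 := hc
end
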